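/- Let p be an odd prime and n a positive integer divisible by 4. Then the number of indices m with 0 ≤ m ≤ n/2 - 2, m even, such that p divides C(n,m) equals the number of indices m with 1 ≤ m ≤ n/2 - 1, m odd, such that p divides C(n,m). -/

import Mathlib

open Finset

/-- A prime `p` does not divide `C(a,b)` when `b ≤ a < p`. -/
private lemma aux_not_dvd_choose_small {p a b : ℕ} (hp : p.Prime) (ha : a < p) (hba : b ≤ a) :
    ¬ p ∣ a.choose b := by
  intro h
  have h1 : p ∣ Nat.factorial a := by
    have := Nat.choose_mul_factorial_mul_factorial hba
    exact this ▸ (h.mul_right _).mul_right _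
  exact absurd (hp.dvd_factorial.mp h1) (not_le.mpr ha)

/-- Divisibility version of Lucas' theorem. -/
private lemma aux_dvd_choose_iff {p : ℕ} (hp : p.Prime) (n m : ℕ) :
    p ∣ n.choose m ↔ (n % p < m % p ∨ p ∣ (n / p).choose (m / p)) := by
  have : Fact p.Prime := ⟨hp⟩
  have h := (Choose.choose_modEq_choose_mod_mul_choose_div_nat (p := p) (n := n) (k := m)).dvd_iff
    dvd_rfl
  rw [h, hp.dvd_mul]
  constructor
  · rintro (h1 | h2)
    · left
      by_contra hc
      exact aux_not_dvd_choose_small hp (Nat.mod_lt _ hp.pos) (not_lt.mp hc) h1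
    · exact Or.inr h2
  · rintro (h1 | h2)
    · left; simp [Nat.choose_eq_zero_of_lt h1]
    · exact Or.inr h2

/-- The alternating-sign indicator sum over one full block. -/
private lemma aux_sum_block {p : ℕ} (hp : p.Prime) (hop : Odd p) (n : ℕ) :
    ∑ m ∈ range (n + 1), (if p ∣ n.choose m then 0 else (-1 : ℤ) ^ m)
      = (if Even (n % p) then 1 else 0) *
        ∑ a ∈ range (n / p + 1), (if p ∣ (n / p).choose a then 0 else (-1 : ℤ) ^ a) := by
  have hppos := hp.pos
  -- extend the sum to range (p * (n/p + 1)) : extra terms vanish since choose n m = 0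
  have hext : ∑ m ∈ range (n + 1), (if p ∣ n.choose m then 0 else (-1 : ℤ) ^ m)
      = ∑ m ∈ range (p * (n / p + 1)), (if p ∣ n.choose m then 0 else (-1 : ℤ) ^ m) := by
    apply Finset.sum_subset
    · apply Finset.range_subset_range.mpr
      have h2 : n < (n / p + 1) * p := (Nat.div_lt_iff_lt_mul hppos).mp (Nat.lt_succ_self _)
      rw [mul_comm] at h2
      exact h2
    · intro x hx hxn
      simp only [mem_range] at hx hxn
      have hx2 : n < x := by omega
      simp [Nat.choose_eq_zero_of_lt hx2]
  rw [hext]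
  -- split range (p * (q+1)) into q+1 blocks of size p
  have hsplit : ∀ Q : ℕ, ∑ m ∈ range (p * Q), (if p ∣ n.choose m then 0 else (-1 : ℤ) ^ m)
      = ∑ a ∈ range Q, ∑ b ∈ range p,
          (if p ∣ n.choose (p * a + b) then 0 else (-1 : ℤ) ^ (p * a + b)) := by
    intro Q
    induction Q with
    | zero => simp
    | succ k ih =>
      rw [Nat.mul_succ, Finset.sum_range_add, ih, Finset.sum_range_succ]
  rw [hsplit]
  -- compute each block
  have hblock : ∀ a, ∑ b ∈ range p,
        (if p ∣ n.choose (p * a + b) then 0 else (-1 : ℤ) ^ (p * a + b))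
      = (if Even (n % p) then 1 else 0) * (if p ∣ (n / p).choose a then 0 else (-1 : ℤ) ^ a) := by
    intro a
    have hterm : ∀ b ∈ range p, (if p ∣ n.choose (p * a + b) then 0 else (-1 : ℤ) ^ (p * a + b))
        = (if p ∣ (n / p).choose a then 0 else (-1 : ℤ) ^ a) *
            (if b ≤ n % p then (-1 : ℤ) ^ b else 0) := by
      intro b hb
      simp only [mem_range] at hb
      have hmod : (p * a + b) % p = b := by rw [Nat.mul_add_mod, Nat.mod_eq_of_lt hb]
      have hdiv : (p * a + b) / p = a := by
        rw [Nat.mul_add_div hppos, Nat.div_eq_of_lt hb, add_zero]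
      have hcond : (p ∣ n.choose (p * a + b)) ↔ (n % p < b ∨ p ∣ (n / p).choose a) := by
        rw [aux_dvd_choose_iff hp n (p * a + b), hmod, hdiv]
      rw [if_congr hcond rfl rfl]
      have hpow : (-1 : ℤ) ^ (p * a + b) = (-1 : ℤ) ^ a * (-1 : ℤ) ^ b := by
        rw [pow_add, pow_mul, hop.neg_one_pow]
      by_cases h1 : n % p < b
      · have hble : ¬ b ≤ n % p := by omega
        rw [if_pos (Or.inl h1), if_neg hble]
        ring
      · by_cases h2 : p ∣ (n / p).choose a
        · rw [if_pos (Or.inr h2), if_pos h2]; ring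
        · have hble : b ≤ n % p := by omega
          rw [if_neg (by tauto), if_neg h2, if_pos hble, hpow]
    rw [Finset.sum_congr rfl hterm, ← Finset.mul_sum]
    have hfil : ∑ b ∈ range p, (if b ≤ n % p then (-1 : ℤ) ^ b else 0)
        = ∑ b ∈ range (n % p + 1), (-1 : ℤ) ^ b := by
      rw [← Finset.sum_filter]
      congr 1
      ext b
      simp only [mem_filter, mem_range]
      constructor
      · rintro ⟨_, hb⟩; omega
      · intro hb
        have := Nat.mod_lt n hppos
        omega
    rw [hfil, neg_one_geom_sum]
    rcases Nat.even_or_odd (n % p + 1) with hE | hO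
    · have hno : ¬ Even (n % p) := by rw [Nat.even_iff] at hE ⊢; omega
      rw [if_pos hE, if_neg hno]; ring
    · have hyes : Even (n % p) := by
        rw [Nat.odd_iff] at hO; rw [Nat.even_iff]; omega
      rw [if_neg (Nat.not_even_iff_odd.mpr hO), if_pos hyes]; ring
  rw [Finset.sum_congr rfl (fun a _ => hblock a), ← Finset.mul_sum]

/-- The full alternating-sign indicator sum equals the indicator of the middle term. -/
private lemma aux_T_eq {p : ℕ} (hp : p.Prime) (hop : Odd p) :
    ∀ n : ℕ, Even n →
      ∑ m ∈ range (n + 1), (if p ∣ n.choose m then 0 else (-1 : ℤ) ^ m)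
        = (if p ∣ n.choose (n / 2) then 0 else 1) := by
  intro n
  induction n using Nat.strong_induction_on with
  | _ n ih =>
    intro hne
    obtain ⟨u, hu⟩ := hop
    have hppos : 0 < p := by omega
    have hp1 : 1 < p := hp.one_lt
    rcases Nat.eq_zero_or_pos n with hn0 | hnpos
    · subst hn0
      norm_num [Nat.dvd_one, hp.ne_one]
    rw [aux_sum_block hp ⟨u, hu⟩]
    have hq_lt : n / p < n := Nat.div_lt_self hnpos hp1
    have hnqr : n = p * (n / p) + n % p := (Nat.div_add_mod n p).symm
    have hrp : n % p < p := Nat.mod_lt n hppos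
    obtain ⟨n', hn'⟩ := hne
    by_cases hq : Even (n / p)
    · obtain ⟨q', hq'⟩ := hq
      have hr : Even (n % p) := by
        rcases Nat.even_or_odd (n % p) with h | h
        · exact h
        · exfalso
          obtain ⟨t, ht⟩ := h
          obtain ⟨X, e⟩ : ∃ X, n = 2 * X + 1 :=
            ⟨(2 * u + 1) * q' + t, by rw [hq', ht] at hnqr; rw [hnqr, hu]; ring⟩
          omega
      obtain ⟨r', hr'⟩ := hr
      have hr'p : r' < p := by omega
      rw [if_pos ⟨r', hr'⟩, one_mul, ih (n / p) hq_lt ⟨q', hq'⟩]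
      have e1 : n = 2 * (p * q' + r') := by
        rw [hq', hr'] at hnqr
        rw [hnqr]; ring
      have hhalf : n / 2 = p * q' + r' := by
        rw [e1]; exact Nat.mul_div_cancel_left _ (by norm_num)
      have hmod2 : (n / 2) % p = r' := by
        rw [hhalf, Nat.mul_add_mod, Nat.mod_eq_of_lt hr'p]
      have hdiv2 : (n / 2) / p = q' := by
        rw [hhalf, Nat.mul_add_div hppos, Nat.div_eq_of_lt hr'p, add_zero]
      have hqhalf : (n / p) / 2 = q' := by omega
      have hiff : (p ∣ n.choose (n / 2)) ↔ (p ∣ (n / p).choose (n / p / 2)) := by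
        rw [aux_dvd_choose_iff hp n (n / 2), hmod2, hdiv2, hqhalf]
        constructor
        · rintro (h | h)
          · omega
          · exact h
        · exact Or.inr
      by_cases hd : p ∣ (n / p).choose (n / p / 2)
      · rw [if_pos hd, if_pos (hiff.mpr hd)]
      · rw [if_neg hd, if_neg (fun h => hd (hiff.mp h))]
    · have hqo : Odd (n / p) := Nat.not_even_iff_odd.mp hq
      obtain ⟨s, hs⟩ := hqo
      have hr : Odd (n % p) := by
        rcases Nat.even_or_odd (n % p) with h | h
        · exfalso
          obtain ⟨t, ht⟩ := h
          obtain ⟨X, e⟩ : ∃ X, n = 2 * X + 1 :=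
            ⟨(2 * u + 1) * s + u + t, by rw [hs, ht] at hnqr; rw [hnqr, hu]; ring⟩
          omega
        · exact h
      obtain ⟨t, ht⟩ := hr
      rw [if_neg (by rw [Nat.even_iff]; omega), zero_mul]
      have e1 : n = 2 * (p * s + (u + t + 1)) := by
        rw [hs, ht] at hnqr
        rw [hnqr, hu]; ring
      have hhalf : n / 2 = p * s + (u + t + 1) := by
        rw [e1]; exact Nat.mul_div_cancel_left _ (by norm_num)
      have hutp : u + t + 1 < p := by omega
      have hmod2 : (n / 2) % p = u + t + 1 := by
        rw [hhalf, Nat.mul_add_mod, Nat.mod_eq_of_lt hutp]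
      rw [if_pos ((aux_dvd_choose_iff hp n (n / 2)).mpr (Or.inl (by rw [hmod2, ht]; omega)))]

/-- For an odd prime `p` and `n` a positive multiple of 4, the even indices
`0 ≤ m ≤ n/2 - 2` with `p ∣ C(n,m)` are as numerous as the odd indices
`1 ≤ m ≤ n/2 - 1` with `p ∣ C(n,m)`. -/
theorem binom_lemma_four_dvd (p n : ℕ) (hp : p.Prime) (hodd : Odd p)
    (hn : 0 < n) (h4 : 4 ∣ n) :
    ((Finset.range (n / 2 - 1)).filter (fun m => Even m ∧ p ∣ n.choose m)).card =
      ((Finset.range (n / 2)).filter (fun m => Odd m ∧ p ∣ n.choose m)).card := by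
  obtain ⟨c, hc⟩ := h4
  set k := n / 2 with hk
  have hk2 : k = 2 * c := by omega
  have hkeven : Even k := ⟨c, by omega⟩
  have hkpos : 0 < k := by omega
  set f : ℕ → ℤ := fun m => if p ∣ n.choose m then 0 else (-1 : ℤ) ^ m with hf
  -- symmetry : f (n - j) = f j for j ≤ n
  have hsym : ∀ j ≤ n, f (n - j) = f j := by
    intro j hj
    have h1 : n.choose (n - j) = n.choose j := Nat.choose_symm hj
    have h2 : (-1 : ℤ) ^ (n - j) = (-1 : ℤ) ^ j := by
      have ha : (-1 : ℤ) ^ (n - j) * (-1 : ℤ) ^ j = 1 := by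
        rw [← pow_add, Nat.sub_add_cancel hj]
        exact Even.neg_one_pow ⟨k, by omega⟩
      have hb : (-1 : ℤ) ^ j * (-1 : ℤ) ^ j = 1 := by
        rw [← pow_add]; exact Even.neg_one_pow ⟨j, rfl⟩
      have hc : ((-1 : ℤ) ^ j) ≠ 0 := pow_ne_zero _ (by norm_num)
      exact mul_right_cancel₀ hc (ha.trans hb.symm)
    simp only [hf, h1, h2]
  -- T = 2 S + f k
  have hT : ∑ m ∈ range (n + 1), f m = (∑ m ∈ range k, f m) + ((∑ m ∈ range k, f m) + f k) := by
    have h1 : n + 1 = k + (k + 1) := by omega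
    rw [h1, Finset.sum_range_add]
    congr 1
    have h2 : ∑ i ∈ range (k + 1), f (k + i) = ∑ i ∈ range (k + 1), f i := by
      rw [← Finset.sum_range_reflect (fun i => f (k + i)) (k + 1)]
      apply Finset.sum_congr rfl
      intro i hi
      simp only [mem_range] at hi
      have hki : k + (k + 1 - 1 - i) = n - i := by omega
      simp only [hki]
      exact hsym i (by omega)
    rw [h2, Finset.sum_range_succ]
  have hTval : ∑ m ∈ range (n + 1), f m = (if p ∣ n.choose k then 0 else 1) := by
    have := aux_T_eq hp hodd n ⟨k, by omega⟩
    rw [← hk] at this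
    exact this
  have hfk : f k = (if p ∣ n.choose k then 0 else 1) := by
    simp only [hf]
    by_cases h : p ∣ n.choose k
    · simp [h]
    · simp [h, hkeven.neg_one_pow]
  have hS : ∑ m ∈ range k, f m = 0 := by
    have := hT
    rw [hTval, hfk] at this
    linarith
  -- total alternating sum over range k is 0 since k is even
  have htot : ∑ m ∈ range k, (-1 : ℤ) ^ m = 0 := by
    rw [neg_one_geom_sum, if_pos hkeven]
  -- split by divisibility
  have hsplit : ∑ m ∈ range k, (-1 : ℤ) ^ m
      = (∑ m ∈ (range k).filter (fun m => p ∣ n.choose m), (-1 : ℤ) ^ m)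
        + ∑ m ∈ (range k).filter (fun m => ¬ p ∣ n.choose m), (-1 : ℤ) ^ m :=
    (Finset.sum_filter_add_sum_filter_not _ _ _).symm
  have hS' : ∑ m ∈ (range k).filter (fun m => ¬ p ∣ n.choose m), (-1 : ℤ) ^ m
      = ∑ m ∈ range k, f m := by
    rw [Finset.sum_filter]
    apply Finset.sum_congr rfl
    intro m _
    simp only [hf]
    by_cases h : p ∣ n.choose m <;> simp [h]
  have hdvdsum : ∑ m ∈ (range k).filter (fun m => p ∣ n.choose m), (-1 : ℤ) ^ m = 0 := by
    rw [htot] at hsplit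
    rw [hS', hS] at hsplit
    linarith
  -- express that sum as a difference of cardinalities
  set D := (range k).filter (fun m => p ∣ n.choose m) with hD
  have hcard : ∑ m ∈ D, (-1 : ℤ) ^ m
      = ((D.filter (fun m => Even m)).card : ℤ) - ((D.filter (fun m => ¬ Even m)).card : ℤ) := by
    rw [← Finset.sum_filter_add_sum_filter_not D (fun m => Even m)]
    rw [Finset.sum_congr rfl (fun m hm => (Finset.mem_filter.mp hm).2.neg_one_pow),
      Finset.sum_congr (rfl : D.filter (fun m => ¬ Even m) = _)
        (fun m hm => (Nat.not_even_iff_odd.mp (Finset.mem_filter.mp hm).2).neg_one_pow)]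
    simp [sub_eq_add_neg]
  have hEO : (D.filter (fun m => Even m)).card = (D.filter (fun m => ¬ Even m)).card := by
    rw [hdvdsum] at hcard
    have h2 : ((D.filter (fun m => Even m)).card : ℤ)
        = ((D.filter (fun m => ¬ Even m)).card : ℤ) := by linarith
    exact_mod_cast h2
  -- rewrite the goal in terms of D
  have hgoalL : ((Finset.range (k - 1)).filter (fun m => Even m ∧ p ∣ n.choose m))
      = D.filter (fun m => Even m) := by
    rw [hD, Finset.filter_filter]
    have hins : range k = insert (k - 1) (range (k - 1)) := by
      conv_lhs => rw [← Nat.succ_pred_eq_of_pos hkpos]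
      exact Finset.range_add_one
    rw [hins, Finset.filter_insert, if_neg]
    · apply Finset.filter_congr
      intro m _
      constructor
      · rintro ⟨h1, h2⟩; exact ⟨h2, h1⟩
      · rintro ⟨h1, h2⟩; exact ⟨h2, h1⟩
    · rintro ⟨-, hcon⟩
      have : Odd (k - 1) := ⟨c - 1, by omega⟩
      exact (Nat.not_even_iff_odd.mpr this) hcon
  have hgoalR : ((Finset.range k).filter (fun m => Odd m ∧ p ∣ n.choose m))
      = D.filter (fun m => ¬ Even m) := by
    rw [hD, Finset.filter_filter]
    apply Finset.filter_congr
    intro m _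
    simp only [← Nat.not_even_iff_odd]
    constructor
    · rintro ⟨h1, h2⟩; exact ⟨h2, h1⟩
    · rintro ⟨h1, h2⟩; exact ⟨h2, h1⟩
  rw [hgoalL, hgoalR, hEO]
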